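/- With the same setup as the geometric ergodicity inheritance, if (X_k) is uniformly ergodic, i.e., sup_x ‖K_X^m(x,·) − μ‖_TV ≤ C r^{-m} for some C < ∞, r > 1, then the augmented chain (Z_k) is uniformly ergodic: sup_{(x,y)} ‖K_Z^m((x,y),·) − μ⊙q‖_TV ≤ C r^{-(m-1)}. -/

import Mathlib

open MeasureTheory ENNReal

/-- The measure `μ ⊙ q` on `ℝ^d × ℝ^d` with `(μ ⊙ q)(A × B) = ∫_A ∫_B q(y|x) dy dμ(x)`. -/
noncomputable def odotMeasure {d : ℕ} (q : (Fin d → ℝ) → (Fin d → ℝ) → ℝ)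
    (μ : Measure (Fin d → ℝ)) : Measure ((Fin d → ℝ) × (Fin d → ℝ)) :=
  (μ.prod volume).withDensity fun p => ENNReal.ofReal (q p.1 p.2)

/-- The proposal measure `q(·|x)` as a measure on `ℝ^d`. -/
noncomputable def propMeasure {d : ℕ} (q : (Fin d → ℝ) → (Fin d → ℝ) → ℝ)
    (x : Fin d → ℝ) : Measure (Fin d → ℝ) :=
  volume.withDensity fun y => ENNReal.ofReal (q x y)

/-- Marginal transition kernel `K_X` of the acceptance-rejection chain: draw `y ∼ q(·|x)`,
move to `y` with probability `α(x,y)` and stay at `x` otherwise. -/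
noncomputable def accRejKernel {d : ℕ} (q : (Fin d → ℝ) → (Fin d → ℝ) → ℝ)
    (α : (Fin d → ℝ) → (Fin d → ℝ) → ℝ) (x : Fin d → ℝ) : Measure (Fin d → ℝ) :=
  (propMeasure q x).bind fun y =>
    ENNReal.ofReal (1 - α x y) • Measure.dirac x + ENNReal.ofReal (α x y) • Measure.dirac y

/-- Transition kernel `K_Z` of the augmented chain `Z_k = (X_k, Y_k)`:
`K_Z((x,y), A×B) = (1-α(x,y)) 1_A(x) q(B|x) + α(x,y) 1_A(y) q(B|y)`. -/
noncomputable def augKernel {d : ℕ} (q : (Fin d → ℝ) → (Fin d → ℝ) → ℝ)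
    (α : (Fin d → ℝ) → (Fin d → ℝ) → ℝ) (p : (Fin d → ℝ) × (Fin d → ℝ)) :
    Measure ((Fin d → ℝ) × (Fin d → ℝ)) :=
  ENNReal.ofReal (1 - α p.1 p.2) • (Measure.dirac p.1).prod (propMeasure q p.1)
    + ENNReal.ofReal (α p.1 p.2) • (Measure.dirac p.2).prod (propMeasure q p.2)

/-- `m`-step iterate `κ^m(x, ·)` of a transition kernel, with `κ^0(x,·) = δ_x`. -/
noncomputable def iterKernel {β : Type*} [MeasurableSpace β]
    (κ : β → Measure β) : ℕ → β → Measure β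
  | 0, x => Measure.dirac x
  | (m + 1), x => (iterKernel κ m x).bind κ

/-- Total variation distance between two measures (as a supremum over measurable events). -/
noncomputable def tvDist {β : Type*} [MeasurableSpace β] (μ ν : Measure β) : ℝ :=
  ⨆ s : Set β, |(μ s).toReal - (ν s).toReal|

/-! ### Generic auxiliary lemmas -/

section Generic

variable {β γ δ : Type*} [MeasurableSpace β] [MeasurableSpace γ] [MeasurableSpace δ]

lemma aux_bind_add_smul (μ₁ μ₂ : Measure β) (a b : ℝ≥0∞) {f : β → Measure γ}
    (hf : Measurable f) :
    (a • μ₁ + b • μ₂).bind f = a • μ₁.bind f + b • μ₂.bind f := by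
  ext s hs
  simp [Measure.bind_apply hs hf.aemeasurable, lintegral_add_measure, lintegral_smul_measure]

lemma aux_map_bind (μ : Measure β) {h : β → γ} (hh : Measurable h)
    {f : γ → Measure δ} (hf : Measurable f) :
    (μ.map h).bind f = μ.bind fun x => f (h x) := by
  ext s hs
  rw [Measure.bind_apply hs hf.aemeasurable,
    lintegral_map (f := fun a => (f a) s) ((Measure.measurable_coe hs).comp hf) hh,
    Measure.bind_apply hs (show Measurable fun x => f (h x) from hf.comp hh).aemeasurable]

lemma aux_tv_bdd (P Q : Measure γ) [IsProbabilityMeasure P] [IsProbabilityMeasure Q] :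
    BddAbove (Set.range fun s : Set γ => |(P s).toReal - (Q s).toReal|) := by
  refine ⟨1, ?_⟩
  rintro _ ⟨s, rfl⟩
  have h1 : (P s).toReal ≤ 1 := ENNReal.toReal_le_of_le_ofReal zero_le_one (by simpa using prob_le_one)
  have h2 : (Q s).toReal ≤ 1 := ENNReal.toReal_le_of_le_ofReal zero_le_one (by simpa using prob_le_one)
  have h3 : (0:ℝ) ≤ (P s).toReal := ENNReal.toReal_nonneg
  have h4 : (0:ℝ) ≤ (Q s).toReal := ENNReal.toReal_nonneg
  rw [abs_sub_le_iff]
  constructor <;> linarith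

lemma aux_tv_term_le (P Q : Measure γ) [IsProbabilityMeasure P] [IsProbabilityMeasure Q]
    (s : Set γ) : |(P s).toReal - (Q s).toReal| ≤ tvDist P Q :=
  le_ciSup (aux_tv_bdd P Q) s

lemma aux_tvDist_nonneg (P Q : Measure γ) [IsProbabilityMeasure P] [IsProbabilityMeasure Q] :
    0 ≤ tvDist P Q := by
  have := aux_tv_term_le P Q ∅
  simpa using this.trans_eq' (by simp)

lemma aux_tv_le_of_meas (P Q : Measure γ) {D : ℝ}
    (h : ∀ s : Set γ, MeasurableSet s → |(P s).toReal - (Q s).toReal| ≤ D) :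
    tvDist P Q ≤ D := by
  refine ciSup_le fun s => ?_
  set t := toMeasurable P s ∩ toMeasurable Q s with ht
  have hsub : s ⊆ t := Set.subset_inter (subset_toMeasurable P s) (subset_toMeasurable Q s)
  have hP : P t = P s := le_antisymm
    (le_trans (measure_mono Set.inter_subset_left) (measure_toMeasurable s).le)
    (measure_mono hsub)
  have hQ : Q t = Q s := le_antisymm
    (le_trans (measure_mono Set.inter_subset_right) (measure_toMeasurable s).le)
    (measure_mono hsub)
  have : |(P s).toReal - (Q s).toReal| = |(P t).toReal - (Q t).toReal| := by rw [hP, hQ]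
  rw [this]
  exact h t ((measurableSet_toMeasurable _ _).inter (measurableSet_toMeasurable _ _))

/-- Layer-cake comparison: if `ν s ≤ μ s + D` on measurable sets then the same holds for
integrals of functions with values in `[0,1]`. -/
lemma aux_lintegral_le_add (ν μ : Measure β) [IsProbabilityMeasure ν] [IsProbabilityMeasure μ]
    {f : β → ℝ≥0∞} (hf : Measurable f) (hf1 : ∀ u, f u ≤ 1) {D : ℝ} (hD : 0 ≤ D)
    (h : ∀ s : Set β, MeasurableSet s → (ν s).toReal ≤ (μ s).toReal + D) :
    (∫⁻ u, f u ∂ν).toReal ≤ (∫⁻ u, f u ∂μ).toReal + D := by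
  set fr : β → ℝ := fun u => (f u).toReal with hfr
  have hfrm : Measurable fr := hf.ennreal_toReal
  have hfrle : ∀ u, fr u ≤ 1 := fun u =>
    ENNReal.toReal_le_of_le_ofReal zero_le_one (by simpa using hf1 u)
  have hfeq : ∀ u, f u = ENNReal.ofReal (fr u) := fun u =>
    (ENNReal.ofReal_toReal (ne_top_of_le_ne_top one_ne_top (hf1 u))).symm
  have key : ∀ P : Measure β, ∫⁻ u, f u ∂P = ∫⁻ t in Set.Ioi (0:ℝ), P {a | t < fr a} := by
    intro P
    calc ∫⁻ u, f u ∂P = ∫⁻ u, ENNReal.ofReal (fr u) ∂P := by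
          exact lintegral_congr hfeq
      _ = ∫⁻ t in Set.Ioi (0:ℝ), P {a | t < fr a} :=
          lintegral_eq_lintegral_meas_lt P (ae_of_all _ fun u => ENNReal.toReal_nonneg)
            hfrm.aemeasurable
  have hzero : ∀ P : Measure β, ∫⁻ t in Set.Ioi (1:ℝ), P {a | t < fr a} = 0 := by
    intro P
    have : ∫⁻ t in Set.Ioi (1:ℝ), P {a | t < fr a} = ∫⁻ _ in Set.Ioi (1:ℝ), (0:ℝ≥0∞) := by
      refine setLIntegral_congr_fun_ae measurableSet_Ioi (ae_of_all _ fun t ht => ?_)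
      have : {a | t < fr a} = ∅ := by
        ext a
        simp only [Set.mem_setOf_eq, Set.mem_empty_iff_false, iff_false, not_lt]
        exact (hfrle a).trans (le_of_lt ht)
      rw [this, measure_empty]
    simpa using this
  have hsplit : ∀ P : Measure β,
      ∫⁻ u, f u ∂P = ∫⁻ t in Set.Ioc (0:ℝ) 1, P {a | t < fr a} := by
    intro P
    rw [key P, ← Set.Ioc_union_Ioi_eq_Ioi (zero_le_one (α := ℝ)),
      lintegral_union measurableSet_Ioi
        (by rw [Set.disjoint_left]; rintro t ⟨_, h1⟩ h2; exact absurd h2 (not_lt.2 h1)),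
      hzero P, add_zero]
  have hpt : ∀ t : ℝ, ν {a | t < fr a} ≤ μ {a | t < fr a} + ENNReal.ofReal D := by
    intro t
    have hm : MeasurableSet {a | t < fr a} := measurableSet_lt measurable_const hfrm
    have hh := h _ hm
    calc ν {a | t < fr a} = ENNReal.ofReal ((ν {a | t < fr a}).toReal) :=
          (ENNReal.ofReal_toReal (measure_ne_top _ _)).symm
      _ ≤ ENNReal.ofReal ((μ {a | t < fr a}).toReal + D) := ENNReal.ofReal_le_ofReal hh
      _ = ENNReal.ofReal ((μ {a | t < fr a}).toReal) + ENNReal.ofReal D :=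
          ENNReal.ofReal_add ENNReal.toReal_nonneg hD
      _ = μ {a | t < fr a} + ENNReal.ofReal D := by
          rw [ENNReal.ofReal_toReal (measure_ne_top _ _)]
  have hle : ∫⁻ u, f u ∂ν ≤ ∫⁻ u, f u ∂μ + ENNReal.ofReal D := by
    rw [hsplit ν]
    calc ∫⁻ t in Set.Ioc (0:ℝ) 1, ν {a | t < fr a}
        ≤ ∫⁻ t in Set.Ioc (0:ℝ) 1, (μ {a | t < fr a} + ENNReal.ofReal D) :=
          lintegral_mono fun t => hpt t
      _ = (∫⁻ t in Set.Ioc (0:ℝ) 1, μ {a | t < fr a})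
            + ENNReal.ofReal D * volume (Set.Ioc (0:ℝ) 1) := by
          rw [lintegral_add_right _ measurable_const, setLIntegral_const]
      _ ≤ (∫⁻ t in Set.Ioi (0:ℝ), μ {a | t < fr a}) + ENNReal.ofReal D := by
          refine add_le_add (lintegral_mono_set Set.Ioc_subset_Ioi_self) ?_
          have hv : volume (Set.Ioc (0:ℝ) 1) = 1 := by rw [Real.volume_Ioc]; norm_num
          rw [hv, mul_one]
      _ = ∫⁻ u, f u ∂μ + ENNReal.ofReal D := by rw [← key μ]
  have hμfin : ∫⁻ u, f u ∂μ ≠ ⊤ := by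
    refine ne_top_of_le_ne_top (by simp : (1:ℝ≥0∞) ≠ ⊤) ?_
    calc ∫⁻ u, f u ∂μ ≤ ∫⁻ _, 1 ∂μ := lintegral_mono hf1
      _ = 1 := by simp
  calc (∫⁻ u, f u ∂ν).toReal ≤ (∫⁻ u, f u ∂μ + ENNReal.ofReal D).toReal :=
        ENNReal.toReal_mono (by finiteness) hle
    _ = (∫⁻ u, f u ∂μ).toReal + D := by
        rw [ENNReal.toReal_add hμfin ENNReal.ofReal_ne_top, ENNReal.toReal_ofReal hD]

/-- Binding with a probability kernel contracts total variation. -/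
lemma aux_tvDist_bind_le (ν μ : Measure β) [IsProbabilityMeasure ν] [IsProbabilityMeasure μ]
    {g : β → Measure γ} (hg : Measurable g) (hgp : ∀ u, g u Set.univ = 1) :
    tvDist (ν.bind g) (μ.bind g) ≤ tvDist ν μ := by
  have hD : 0 ≤ tvDist ν μ := aux_tvDist_nonneg ν μ
  refine aux_tv_le_of_meas _ _ fun s hs => ?_
  have hP : (ν.bind g) s = ∫⁻ u, g u s ∂ν := Measure.bind_apply hs hg.aemeasurable
  have hQ : (μ.bind g) s = ∫⁻ u, g u s ∂μ := Measure.bind_apply hs hg.aemeasurable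
  have hfm : Measurable fun u => g u s := (Measure.measurable_coe hs).comp hg
  have hf1 : ∀ u, g u s ≤ 1 := fun u =>
    (measure_mono (Set.subset_univ s)).trans (hgp u).le
  rw [hP, hQ, abs_sub_le_iff]
  constructor
  · have := aux_lintegral_le_add ν μ hfm hf1 hD fun t ht => by
      have := aux_tv_term_le ν μ t
      rw [abs_sub_le_iff] at this
      linarith [this.1]
    linarith
  · have := aux_lintegral_le_add μ ν hfm hf1 hD fun t ht => by
      have := aux_tv_term_le ν μ t
      rw [abs_sub_le_iff] at this
      linarith [this.2]
    linarith

/-- TV distance of a mixture to a common target. -/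
lemma aux_tvDist_mix_le (ν₁ ν₂ μ : Measure γ) [IsProbabilityMeasure ν₁]
    [IsProbabilityMeasure ν₂] [IsProbabilityMeasure μ]
    {c t : ℝ} (hc0 : 0 ≤ c) (hc1 : c ≤ 1)
    (h1 : tvDist ν₁ μ ≤ t) (h2 : tvDist ν₂ μ ≤ t) :
    tvDist (ENNReal.ofReal (1 - c) • ν₁ + ENNReal.ofReal c • ν₂) μ ≤ t := by
  refine ciSup_le fun s => ?_
  have e : ((ENNReal.ofReal (1 - c) • ν₁ + ENNReal.ofReal c • ν₂) s).toReal
      = (1 - c) * (ν₁ s).toReal + c * (ν₂ s).toReal := by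
    rw [Measure.add_apply, Measure.smul_apply, Measure.smul_apply, smul_eq_mul, smul_eq_mul,
      ENNReal.toReal_add (by finiteness) (by finiteness), ENNReal.toReal_mul,
      ENNReal.toReal_mul, ENNReal.toReal_ofReal (by linarith), ENNReal.toReal_ofReal hc0]
  have k1 : |(ν₁ s).toReal - (μ s).toReal| ≤ t := (aux_tv_term_le ν₁ μ s).trans h1
  have k2 : |(ν₂ s).toReal - (μ s).toReal| ≤ t := (aux_tv_term_le ν₂ μ s).trans h2
  rw [e]
  have e2 : (1 - c) * (ν₁ s).toReal + c * (ν₂ s).toReal - (μ s).toReal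
      = (1 - c) * ((ν₁ s).toReal - (μ s).toReal) + c * ((ν₂ s).toReal - (μ s).toReal) := by
    ring
  rw [e2]
  calc |(1 - c) * ((ν₁ s).toReal - (μ s).toReal) + c * ((ν₂ s).toReal - (μ s).toReal)|
      ≤ |(1 - c) * ((ν₁ s).toReal - (μ s).toReal)| + |c * ((ν₂ s).toReal - (μ s).toReal)| :=
        abs_add_le _ _
    _ = (1 - c) * |(ν₁ s).toReal - (μ s).toReal| + c * |(ν₂ s).toReal - (μ s).toReal| := by
        rw [abs_mul, abs_mul, abs_of_nonneg (by linarith), abs_of_nonneg hc0]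
    _ ≤ (1 - c) * t + c * t := by
        have ht : 0 ≤ t := (abs_nonneg _).trans k1
        gcongr <;> linarith
    _ = t := by ring

end Generic

/-! ### Specific lemmas about the kernels -/

section Kernels

variable {d : ℕ} (q : (Fin d → ℝ) → (Fin d → ℝ) → ℝ)
  (α : (Fin d → ℝ) → (Fin d → ℝ) → ℝ)

/-- The kernel `u ↦ δ_u ⊗ q(·|u)` on the product space. -/
noncomputable def gKer (u : Fin d → ℝ) : Measure ((Fin d → ℝ) × (Fin d → ℝ)) :=
  (propMeasure q u).map (Prod.mk u)

lemma prop_univ (hq_prob : ∀ x, ∫⁻ y, ENNReal.ofReal (q x y) = 1)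
    (x : Fin d → ℝ) : propMeasure q x Set.univ = 1 := by
  rw [propMeasure, withDensity_apply _ MeasurableSet.univ, setLIntegral_univ]
  exact hq_prob x

lemma prop_prob (hq_prob : ∀ x, ∫⁻ y, ENNReal.ofReal (q x y) = 1)
    (x : Fin d → ℝ) : IsProbabilityMeasure (propMeasure q x) :=
  ⟨prop_univ q hq_prob x⟩

lemma gKer_apply (u : Fin d → ℝ) {s : Set ((Fin d → ℝ) × (Fin d → ℝ))}
    (hs : MeasurableSet s) :
    gKer q u s = ∫⁻ v, s.indicator (fun p => ENNReal.ofReal (q p.1 p.2)) (u, v) := by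
  rw [gKer, Measure.map_apply measurable_prodMk_left hs, propMeasure,
    withDensity_apply _ (measurable_prodMk_left hs), ← lintegral_indicator (measurable_prodMk_left hs)]
  exact lintegral_congr fun v => by
    by_cases h : (u, v) ∈ s <;> simp [Set.indicator, Set.mem_preimage, h]

lemma gKer_univ (hq_prob : ∀ x, ∫⁻ y, ENNReal.ofReal (q x y) = 1)
    (u : Fin d → ℝ) : gKer q u Set.univ = 1 := by
  rw [gKer, Measure.map_apply measurable_prodMk_left MeasurableSet.univ]
  simpa using prop_univ q hq_prob u

lemma gKer_prob (hq_prob : ∀ x, ∫⁻ y, ENNReal.ofReal (q x y) = 1)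
    (u : Fin d → ℝ) : IsProbabilityMeasure (gKer q u) :=
  ⟨gKer_univ q hq_prob u⟩

lemma measurable_gKer (hq_meas : Measurable (Function.uncurry q)) :
    Measurable (gKer q) := by
  refine Measure.measurable_of_measurable_coe _ fun s hs => ?_
  simp only [gKer_apply q _ hs]
  exact Measurable.lintegral_prod_right
    (f := fun u v => s.indicator (fun p => ENNReal.ofReal (q p.1 p.2)) (u, v))
    (hq_meas.ennreal_ofReal.indicator hs)

end Kernels

section Kernels2

variable {d : ℕ} (q : (Fin d → ℝ) → (Fin d → ℝ) → ℝ)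
  (α : (Fin d → ℝ) → (Fin d → ℝ) → ℝ)

instance propMeasure.instSFinite {d : ℕ} (q : (Fin d → ℝ) → (Fin d → ℝ) → ℝ)
    (x : Fin d → ℝ) : SFinite (propMeasure q x) := by
  unfold propMeasure; infer_instance

/-- Inner (acceptance) kernel. -/
noncomputable def innerK (u v : Fin d → ℝ) : Measure (Fin d → ℝ) :=
  ENNReal.ofReal (1 - α u v) • Measure.dirac u + ENNReal.ofReal (α u v) • Measure.dirac v

lemma measurable_innerK (hα_meas : Measurable (Function.uncurry α)) (u : Fin d → ℝ) :
    Measurable (innerK α u) := by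
  have hαu : Measurable fun v => α u v := hα_meas.comp measurable_prodMk_left
  refine Measure.measurable_of_measurable_coe _ fun s hs => ?_
  simp only [innerK, Measure.add_apply, Measure.smul_apply, smul_eq_mul,
    Measure.dirac_apply' _ hs]
  exact (((measurable_const.sub hαu).ennreal_ofReal.mul measurable_const).add
    (hαu.ennreal_ofReal.mul (measurable_one.indicator hs)))

lemma accRej_eq_bind (u : Fin d → ℝ) :
    accRejKernel q α u = (propMeasure q u).bind (innerK α u) := rfl

lemma accRej_apply (hq_meas : Measurable (Function.uncurry q))
    (hα_meas : Measurable (Function.uncurry α)) (u : Fin d → ℝ)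
    {s : Set (Fin d → ℝ)} (hs : MeasurableSet s) :
    accRejKernel q α u s = ∫⁻ v, ENNReal.ofReal (q u v) *
      (ENNReal.ofReal (1 - α u v) * s.indicator 1 u
        + ENNReal.ofReal (α u v) * s.indicator 1 v) := by
  have hαu : Measurable fun v => α u v := hα_meas.comp measurable_prodMk_left
  have hqu : Measurable fun v => ENNReal.ofReal (q u v) :=
    (hq_meas.comp measurable_prodMk_left).ennreal_ofReal
  have hinner : Measurable fun v => innerK α u v s :=
    (Measure.measurable_coe hs).comp (measurable_innerK α hα_meas u)
  rw [accRej_eq_bind, Measure.bind_apply hs (measurable_innerK α hα_meas u).aemeasurable, propMeasure,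
    lintegral_withDensity_eq_lintegral_mul _ hqu hinner]
  refine lintegral_congr fun v => ?_
  simp only [Pi.mul_apply, innerK, Measure.add_apply, Measure.smul_apply, smul_eq_mul,
    Measure.dirac_apply' _ hs]

lemma measurable_accRej (hq_meas : Measurable (Function.uncurry q))
    (hα_meas : Measurable (Function.uncurry α)) :
    Measurable (accRejKernel q α) := by
  refine Measure.measurable_of_measurable_coe _ fun s hs => ?_
  simp only [accRej_apply q α hq_meas hα_meas _ hs]
  refine Measurable.lintegral_prod_right
    (f := fun u v => ENNReal.ofReal (q u v) *
      (ENNReal.ofReal (1 - α u v) * s.indicator 1 u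
        + ENNReal.ofReal (α u v) * s.indicator 1 v)) ?_
  exact hq_meas.ennreal_ofReal.mul
    (((measurable_const.sub hα_meas).ennreal_ofReal.mul
        ((measurable_one.indicator hs).comp measurable_fst)).add
      (hα_meas.ennreal_ofReal.mul ((measurable_one.indicator hs).comp measurable_snd)))

lemma accRej_univ (hq_prob : ∀ x, ∫⁻ y, ENNReal.ofReal (q x y) = 1)
    (hα_meas : Measurable (Function.uncurry α))
    (hα : ∀ x y, α x y ∈ Set.Icc (0:ℝ) 1) (u : Fin d → ℝ) :
    accRejKernel q α u Set.univ = 1 := by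
  rw [accRej_eq_bind, Measure.bind_apply MeasurableSet.univ (measurable_innerK α hα_meas u).aemeasurable]
  have : ∀ v, innerK α u v Set.univ = 1 := by
    intro v
    simp only [innerK, Measure.add_apply, Measure.smul_apply, smul_eq_mul, measure_univ,
      mul_one]
    rw [← ENNReal.ofReal_add (by linarith [(hα u v).2]) (hα u v).1]
    norm_num
  simp only [this, lintegral_one]
  exact prop_univ q hq_prob u

lemma iter_accRej_prob (hq_meas : Measurable (Function.uncurry q))
    (hq_prob : ∀ x, ∫⁻ y, ENNReal.ofReal (q x y) = 1)
    (hα_meas : Measurable (Function.uncurry α))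
    (hα : ∀ x y, α x y ∈ Set.Icc (0:ℝ) 1) (m : ℕ) (x : Fin d → ℝ) :
    IsProbabilityMeasure (iterKernel (accRejKernel q α) m x) := by
  induction m with
  | zero => exact ⟨by simp [iterKernel]⟩
  | succ n ih =>
    constructor
    rw [show iterKernel (accRejKernel q α) (n+1) x
        = (iterKernel (accRejKernel q α) n x).bind (accRejKernel q α) from rfl,
      Measure.bind_apply MeasurableSet.univ (measurable_accRej q α hq_meas hα_meas).aemeasurable]
    have : ∀ u, accRejKernel q α u Set.univ = 1 := accRej_univ q α hq_prob hα_meas hα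
    simp only [this, lintegral_one]
    exact ih.measure_univ

lemma augKernel_eq (p : (Fin d → ℝ) × (Fin d → ℝ)) :
    augKernel q α p = ENNReal.ofReal (1 - α p.1 p.2) • gKer q p.1
      + ENNReal.ofReal (α p.1 p.2) • gKer q p.2 := by
  rw [augKernel, gKer, gKer, Measure.dirac_prod, Measure.dirac_prod]

lemma measurable_aug (hq_meas : Measurable (Function.uncurry q))
    (hα_meas : Measurable (Function.uncurry α)) :
    Measurable (augKernel q α) := by
  refine Measure.measurable_of_measurable_coe _ fun s hs => ?_
  have hg : Measurable fun u => gKer q u s :=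
    (Measure.measurable_coe hs).comp (measurable_gKer q hq_meas)
  simp only [augKernel_eq q α, Measure.add_apply, Measure.smul_apply, smul_eq_mul]
  exact (((measurable_const.sub hα_meas).ennreal_ofReal).mul (hg.comp measurable_fst)).add
    ((hα_meas.ennreal_ofReal).mul (hg.comp measurable_snd))

lemma gKer_bind_aug (hq_meas : Measurable (Function.uncurry q))
    (hα_meas : Measurable (Function.uncurry α)) (u : Fin d → ℝ) :
    (gKer q u).bind (augKernel q α) = (accRejKernel q α u).bind (gKer q) := by
  have hgm := measurable_gKer q hq_meas
  rw [gKer, aux_map_bind _ measurable_prodMk_left (measurable_aug q α hq_meas hα_meas),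
    accRej_eq_bind, Measure.bind_bind (measurable_innerK α hα_meas u).aemeasurable hgm.aemeasurable]
  refine congrArg _ (funext fun v => ?_)
  rw [augKernel_eq q α (u, v), innerK, aux_bind_add_smul _ _ _ _ hgm,
    Measure.dirac_bind hgm, Measure.dirac_bind hgm]

lemma iter_aug_eq (hq_meas : Measurable (Function.uncurry q))
    (hα_meas : Measurable (Function.uncurry α)) (m : ℕ) (x y : Fin d → ℝ) :
    iterKernel (augKernel q α) (m + 1) (x, y)
      = (ENNReal.ofReal (1 - α x y) • iterKernel (accRejKernel q α) m x
          + ENNReal.ofReal (α x y) • iterKernel (accRejKernel q α) m y).bind (gKer q) := by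
  have hgm := measurable_gKer q hq_meas
  have hKZ := measurable_aug q α hq_meas hα_meas
  have hK := measurable_accRej q α hq_meas hα_meas
  induction m with
  | zero =>
    show (Measure.dirac (x, y)).bind (augKernel q α) = _
    simp only [iterKernel]
    rw [Measure.dirac_bind hKZ, augKernel_eq q α (x, y),
      aux_bind_add_smul _ _ _ _ hgm, Measure.dirac_bind hgm, Measure.dirac_bind hgm]
  | succ n ih =>
    show (iterKernel (augKernel q α) (n + 1) (x, y)).bind (augKernel q α) = _
    rw [ih, Measure.bind_bind hgm.aemeasurable hKZ.aemeasurable]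
    have : (fun u => (gKer q u).bind (augKernel q α))
        = fun u => (accRejKernel q α u).bind (gKer q) :=
      funext fun u => gKer_bind_aug q α hq_meas hα_meas u
    rw [this, ← Measure.bind_bind hK.aemeasurable hgm.aemeasurable, aux_bind_add_smul _ _ _ _ hK]
    rfl

lemma odot_eq_bind (hq_meas : Measurable (Function.uncurry q))
    (μ : Measure (Fin d → ℝ)) [SFinite μ] :
    odotMeasure q μ = μ.bind (gKer q) := by
  ext s hs
  rw [odotMeasure, withDensity_apply _ hs,
    Measure.bind_apply hs (measurable_gKer q hq_meas).aemeasurable,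
    ← lintegral_indicator hs,
    lintegral_prod (f := fun p => s.indicator (fun p => ENNReal.ofReal (q p.1 p.2)) p)
      ((hq_meas.ennreal_ofReal.indicator hs).aemeasurable)]
  exact lintegral_congr fun u => (gKer_apply q u hs).symm

end Kernels2

/-- If the marginal acceptance-rejection chain `(X_k)` is uniformly ergodic,
i.e. `‖K_X^m(x,·) − μ‖_TV ≤ C r^{-m}` for all `m` and all `x` (with `C < ∞`, `r > 1`),
then the augmented chain is uniformly ergodic:
`‖K_Z^m((x,y),·) − μ ⊙ q‖_TV ≤ C r^{-(m-1)}` for all `m ≥ 1` (written `m + 1`). -/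
theorem augmented_chain_uniformly_ergodic
    {d : ℕ} (q : (Fin d → ℝ) → (Fin d → ℝ) → ℝ)
    (α : (Fin d → ℝ) → (Fin d → ℝ) → ℝ)
    (hq_nonneg : ∀ x y, 0 ≤ q x y)
    (hq_meas : Measurable (Function.uncurry q))
    (hq_prob : ∀ x, ∫⁻ y, ENNReal.ofReal (q x y) = 1)
    (hα : ∀ x y, α x y ∈ Set.Icc (0:ℝ) 1)
    (hα_meas : Measurable (Function.uncurry α))
    (μ : Measure (Fin d → ℝ)) [IsProbabilityMeasure μ]
    (C r : ℝ) (hr : 1 < r)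
    (hunif : ∀ (m : ℕ) (x : Fin d → ℝ),
      tvDist (iterKernel (accRejKernel q α) m x) μ ≤ C / r ^ m) :
    ∀ (m : ℕ) (x y : Fin d → ℝ),
      tvDist (iterKernel (augKernel q α) (m + 1) (x, y)) (odotMeasure q μ) ≤ C / r ^ m := by
  intro m x y
  haveI h1 : IsProbabilityMeasure (iterKernel (accRejKernel q α) m x) :=
    iter_accRej_prob q α hq_meas hq_prob hα_meas hα m x
  haveI h2 : IsProbabilityMeasure (iterKernel (accRejKernel q α) m y) :=
    iter_accRej_prob q α hq_meas hq_prob hα_meas hα m y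
  haveI hmix : IsProbabilityMeasure
      (ENNReal.ofReal (1 - α x y) • iterKernel (accRejKernel q α) m x
        + ENNReal.ofReal (α x y) • iterKernel (accRejKernel q α) m y) := by
    constructor
    rw [Measure.add_apply, Measure.smul_apply, Measure.smul_apply]
    simp only [measure_univ, smul_eq_mul, mul_one]
    rw [← ENNReal.ofReal_add (by linarith [(hα x y).2]) (hα x y).1]
    norm_num
  rw [iter_aug_eq q α hq_meas hα_meas m x y, odot_eq_bind q hq_meas μ]
  calc tvDist ((ENNReal.ofReal (1 - α x y) • iterKernel (accRejKernel q α) m x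
          + ENNReal.ofReal (α x y) • iterKernel (accRejKernel q α) m y).bind (gKer q))
        (μ.bind (gKer q))
      ≤ tvDist (ENNReal.ofReal (1 - α x y) • iterKernel (accRejKernel q α) m x
          + ENNReal.ofReal (α x y) • iterKernel (accRejKernel q α) m y) μ :=
        aux_tvDist_bind_le _ μ (measurable_gKer q hq_meas) (gKer_univ q hq_prob)
    _ ≤ C / r ^ m :=
        aux_tvDist_mix_le _ _ μ (hα x y).1 (hα x y).2 (hunif m x) (hunif m y)
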